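/- Define t̃_k(L,ℓ) = 2(L²-ℓ²)^k/(4^k k!) for 0 ≤ ℓ < L and t̃_k(L,ℓ) = 0 for ℓ ≥ L (k ≥ 0), and t_k(L) = (2/k!)(L/2)^{2k}. Then for all integers a, b ≥ 0 and 0 < L₁ < L₂: ∫₀^∞ ℓ · t̃_a(L₁,ℓ) · t̃_b(L₂,ℓ) dℓ = 2 ∑_{m=0}^{b} (-1)^m t_{a+1+m}(L₁) t_{b-m}(L₂). -/

import Mathlib

open MeasureTheory Finset

noncomputable def tW (k : ℕ) (L : ℝ) : ℝ := 2 / (Nat.factorial k) * (L / 2) ^ (2 * k)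

noncomputable def ttilde (k : ℕ) (L ℓ : ℝ) : ℝ :=
  if ℓ < L then 2 * (L ^ 2 - ℓ ^ 2) ^ k / (4 ^ k * Nat.factorial k) else 0

noncomputable def PP (k : ℕ) (L ℓ : ℝ) : ℝ := 2 * (L ^ 2 - ℓ ^ 2) ^ k / (4 ^ k * Nat.factorial k)

lemma PP_cont (k : ℕ) (L : ℝ) : Continuous (fun x => PP k L x) := by
  unfold PP; fun_prop

lemma PP_zero (k : ℕ) (L : ℝ) : PP k L 0 = tW k L := by
  unfold PP tW
  have h : ((L:ℝ)/2) ^ (2*k) = (L^2)^k / 4^k := by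
    rw [div_pow, pow_mul, pow_mul]; norm_num
  rw [h]
  have hk : (Nat.factorial k : ℝ) ≠ 0 := by positivity
  field_simp
  ring_nf

lemma PP_deriv (k : ℕ) (L x : ℝ) :
    HasDerivAt (fun y => PP (k+1) L y) (-(x/2) * PP k L x) x := by
  have h0 : HasDerivAt (fun y : ℝ => L ^ 2 - y ^ 2) (-(2 * x)) x := by
    simpa using (hasDerivAt_pow 2 x).const_sub (L ^ 2)
  have h1 := ((h0.pow (k+1)).const_mul (2 : ℝ)).div_const ((4:ℝ)^(k+1) * Nat.factorial (k+1))
  refine h1.congr_deriv ?_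
  have hk : (Nat.factorial k : ℝ) ≠ 0 := by positivity
  unfold PP
  rw [Nat.factorial_succ]
  push_cast
  field_simp
  ring

lemma key (L₁ L₂ : ℝ) : ∀ b a : ℕ,
    ∫ x in (0:ℝ)..L₁, x * PP a L₁ x * PP b L₂ x
      = 2 * ∑ m ∈ range (b + 1), (-1) ^ m * tW (a + 1 + m) L₁ * tW (b - m) L₂ := by
  intro b
  induction b with
  | zero =>
    intro a
    have hF : ∀ x ∈ Set.uIcc (0:ℝ) L₁, HasDerivAt (fun y => (-4 : ℝ) * PP (a+1) L₁ y)
        (x * PP a L₁ x * PP 0 L₂ x) x := by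
      intro x _
      have := (PP_deriv a L₁ x).const_mul (-4 : ℝ)
      have he : -4 * (-(x/2) * PP a L₁ x) = x * PP a L₁ x * PP 0 L₂ x := by
        unfold PP; norm_num; ring
      rwa [he] at this
    rw [intervalIntegral.integral_eq_sub_of_hasDerivAt hF
      (by exact (Continuous.mul ((continuous_id.mul (PP_cont a L₁))) (PP_cont 0 L₂)).intervalIntegrable 0 L₁)]
    have hz : PP (a+1) L₁ L₁ = 0 := by unfold PP; simp
    rw [hz, PP_zero]
    simp [tW]
    ring
  | succ b ih =>
    intro a
    have hu : ∀ x ∈ Set.uIcc (0:ℝ) L₁, HasDerivAt (fun y => PP (b+1) L₂ y) (-(x/2) * PP b L₂ x) x :=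
      fun x _ => PP_deriv b L₂ x
    have hv : ∀ x ∈ Set.uIcc (0:ℝ) L₁, HasDerivAt (fun y => (-2 : ℝ) * PP (a+1) L₁ y)
        (x * PP a L₁ x) x := by
      intro x _
      have := (PP_deriv a L₁ x).const_mul (-2 : ℝ)
      have he : -2 * (-(x/2) * PP a L₁ x) = x * PP a L₁ x := by ring
      rwa [he] at this
    have hiu : IntervalIntegrable (fun x => -(x/2) * PP b L₂ x) volume 0 L₁ :=
      (Continuous.mul (by fun_prop) (PP_cont b L₂)).intervalIntegrable 0 L₁
    have hiv : IntervalIntegrable (fun x => x * PP a L₁ x) volume 0 L₁ :=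
      (continuous_id.mul (PP_cont a L₁)).intervalIntegrable 0 L₁
    have ibp := intervalIntegral.integral_mul_deriv_eq_deriv_mul hu hv hiu hiv
    have hleft : (∫ x in (0:ℝ)..L₁, PP (b+1) L₂ x * (x * PP a L₁ x))
        = ∫ x in (0:ℝ)..L₁, x * PP a L₁ x * PP (b+1) L₂ x := by
      apply intervalIntegral.integral_congr; intro x _; ring
    have hright : (∫ x in (0:ℝ)..L₁, -(x/2) * PP b L₂ x * (-2 * PP (a+1) L₁ x))
        = ∫ x in (0:ℝ)..L₁, x * PP (a+1) L₁ x * PP b L₂ x := by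
      apply intervalIntegral.integral_congr; intro x _; ring
    rw [hleft, hright] at ibp
    have hz : PP (a+1) L₁ L₁ = 0 := by unfold PP; simp
    rw [ibp, hz, PP_zero, PP_zero, ih (a+1)]
    rw [Finset.sum_range_succ' (fun m => (-1:ℝ) ^ m * tW (a + 1 + m) L₁ * tW (b + 1 - m) L₂) (b+1)]
    have hs : ∑ m ∈ range (b+1), (-1:ℝ) ^ (m+1) * tW (a + 1 + (m+1)) L₁ * tW (b + 1 - (m+1)) L₂
        = - ∑ m ∈ range (b+1), (-1:ℝ) ^ m * tW (a + 1 + 1 + m) L₁ * tW (b - m) L₂ := by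
      rw [← Finset.sum_neg_distrib]
      apply Finset.sum_congr rfl
      intro m _
      have h3 : a + 1 + (m + 1) = a + 1 + 1 + m := by ring
      have h4 : b + 1 - (m + 1) = b - m := by omega
      rw [h3, h4, pow_succ]
      ring
    rw [hs]
    simp only [Nat.sub_zero, pow_zero]
    ring

/-- `∫₀^∞ ℓ t̃_a(L₁,ℓ) t̃_b(L₂,ℓ) dℓ = 2 ∑_{m=0}^b (-1)^m t_{a+1+m}(L₁) t_{b-m}(L₂)`. -/
theorem integral_ttilde_mul (a b : ℕ) (L₁ L₂ : ℝ) (h1 : 0 < L₁) (h2 : L₁ < L₂) :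
    ∫ ℓ in Set.Ioi (0 : ℝ), ℓ * ttilde a L₁ ℓ * ttilde b L₂ ℓ
      = 2 * ∑ m ∈ range (b + 1), (-1) ^ m * tW (a + 1 + m) L₁ * tW (b - m) L₂ := by
  have hae : (fun ℓ => ℓ * ttilde a L₁ ℓ * ttilde b L₂ ℓ)
      =ᵐ[volume.restrict (Set.Ioi (0:ℝ))]
      (Set.Ioc (0:ℝ) L₁).indicator (fun x => x * PP a L₁ x * PP b L₂ x) := by
    have hne : ∀ᵐ ℓ ∂(volume.restrict (Set.Ioi (0:ℝ))), ℓ ≠ L₁ := by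
      apply ae_restrict_of_ae
      rw [ae_iff]
      simp
    have hmem : ∀ᵐ ℓ ∂(volume.restrict (Set.Ioi (0:ℝ))), ℓ ∈ Set.Ioi (0:ℝ) :=
      ae_restrict_mem measurableSet_Ioi
    filter_upwards [hne, hmem] with ℓ hℓne hℓ
    rcases lt_or_gt_of_ne hℓne with h | h
    · have hmem2 : ℓ ∈ Set.Ioc (0:ℝ) L₁ := ⟨hℓ, h.le⟩
      rw [Set.indicator_of_mem hmem2]
      unfold ttilde PP
      rw [if_pos h, if_pos (h.trans h2)]
    · have hmem2 : ℓ ∉ Set.Ioc (0:ℝ) L₁ := fun hc => absurd hc.2 (not_le.2 h)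
      rw [Set.indicator_of_notMem hmem2]
      unfold ttilde
      rw [if_neg (not_lt.2 h.le)]
      ring
  rw [integral_congr_ae hae, setIntegral_indicator measurableSet_Ioc,
    Set.inter_eq_self_of_subset_right (Set.Ioc_subset_Ioi_self),
    ← intervalIntegral.integral_of_le h1.le]
  exact key L₁ L₂ b a
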